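/- Let n ≥ 2 and let {H_iα_i}_{i=1}^{s} be a coset partition of the free group F_n, where H_i < F_n has finite index d_i > 1 and α_i ∈ F_n. Let N = ⋂_{i=1}^{s} ⋂_{g ∈ F_n} g⁻¹H_ig, let w ∈ F_n, and let o_{*i}(w) be the least positive integer m with w^m ∈ α_i⁻¹H_iα_i. Fix y ∈ F_n and set Y(y) = {1 ≤ i ≤ s : y w^j ∈ H_iα_i for some integer j}, and suppose o_{*i}(w) > 1 for some i ∈ Y(y). Let o_max = max{o_{*i}(w) : i ∈ Y(y)}. Then: (1) the number of indices i ∈ Y(y) with o_{*i}(w) = o_max is at least p, where p is the smallest prime dividing o_max; (2) for every l ∈ Y(y) there exists k ∈ Y(y), k ≠ l, such that o_{*l}(w) divides o_{*k}(w). -/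

import Mathlib

open Finset Polynomial

private lemma geom_zero {μ : ℂ} {M : ℕ} (h1 : μ ≠ 1) (hpow : μ ^ M = 1) :
    ∑ x ∈ range M, μ ^ x = 0 := by
  rw [geom_sum_eq h1, hpow, sub_self, zero_div]

private lemma geom_ite {μ : ℂ} {M : ℕ} (hpow : μ ^ M = 1) :
    ∑ x ∈ range M, μ ^ x = if μ = 1 then (M : ℂ) else 0 := by
  split_ifs with h
  · subst h; simp
  · exact geom_zero h hpow

private lemma zpow_eq_of_dvd_sub {ζ : ℂ} {N : ℕ} (hζ : IsPrimitiveRoot ζ N) (hN : 0 < N)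
    {i j : ℤ} (h : (N : ℤ) ∣ (i - j)) : ζ ^ i = ζ ^ j := by
  have h0 : ζ ≠ 0 := hζ.ne_zero hN.ne'
  have h1 : ζ ^ (i - j) = 1 := (hζ.zpow_eq_one_iff_dvd _).2 h
  calc ζ ^ i = ζ ^ (i - j) * ζ ^ j := by rw [← zpow_add₀ h0]; congr 1; ring
  _ = ζ ^ j := by rw [h1, one_mul]

private lemma geom_zpow {μ : ℂ} {M : ℕ} (hμ : IsPrimitiveRoot μ M) (d : ℤ) :
    ∑ x ∈ range M, μ ^ ((x : ℤ) * d) = if (M : ℤ) ∣ d then (M : ℂ) else 0 := by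
  have hterm : ∀ x : ℕ, μ ^ ((x : ℤ) * d) = (μ ^ d) ^ x := by
    intro x; rw [mul_comm, zpow_mul, zpow_natCast]
  have hpow : (μ ^ d) ^ M = 1 := by
    rw [← zpow_natCast (μ ^ d), ← zpow_mul, mul_comm, zpow_mul, zpow_natCast, hμ.pow_eq_one,
      one_zpow]
  calc ∑ x ∈ range M, μ ^ ((x : ℤ) * d) = ∑ x ∈ range M, (μ ^ d) ^ x := by
        exact Finset.sum_congr rfl (fun x _ => hterm x)
  _ = if μ ^ d = 1 then (M : ℂ) else 0 := geom_ite hpow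
  _ = if (M : ℤ) ∣ d then (M : ℂ) else 0 := by
        exact if_congr (hμ.zpow_eq_one_iff_dvd d) rfl rfl

private lemma abs_eq_one_of_prim {M : ℕ} {ζ : ℂ} (hζ : IsPrimitiveRoot ζ M) (hM : 0 < M) :
    ‖ζ‖ = 1 := by
  have h1 : (‖ζ‖) ^ M = 1 := by
    rw [← norm_pow, hζ.pow_eq_one, norm_one]
  have h0 : 0 ≤ ‖ζ‖ := norm_nonneg ζ
  rcases lt_trichotomy (‖ζ‖) 1 with h | h | h
  · exfalso
    have := pow_lt_one₀ h0 h hM.ne'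
    rw [h1] at this; exact lt_irrefl 1 this
  · exact h
  · exfalso
    have := one_lt_pow₀ h hM.ne'
    rw [h1] at this; exact lt_irrefl 1 this

private lemma RS_trivial {M : ℕ} {ζ : ℂ} (hζ : IsPrimitiveRoot ζ M) (hM : 0 < M) (d : ℤ) :
    norm (∑ u ∈ (range M).filter M.Coprime, ζ ^ ((u : ℤ) * d)) ≤ (M.totient : ℝ) := by
  have habs : ‖ζ‖ = 1 := abs_eq_one_of_prim hζ hM
  have hζ0 : ζ ≠ 0 := hζ.ne_zero hM.ne'
  calc norm (∑ u ∈ (range M).filter M.Coprime, ζ ^ ((u : ℤ) * d))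
      ≤ ∑ u ∈ (range M).filter M.Coprime, norm (ζ ^ ((u : ℤ) * d)) :=
        norm_sum_le _ _
  _ = ∑ u ∈ (range M).filter M.Coprime, (1 : ℝ) := by
        apply Finset.sum_congr rfl; intro u _
        rw [norm_zpow, habs, one_zpow]
  _ = (((range M).filter M.Coprime).card : ℝ) := by rw [Finset.sum_const, nsmul_eq_mul, mul_one]
  _ = (M.totient : ℝ) := by rw [Nat.totient_eq_card_coprime]

private lemma RS_prime_pow_bound {q a : ℕ} (hq : q.Prime) (ha : 0 < a) {ζ : ℂ}
    (hζ : IsPrimitiveRoot ζ (q ^ a)) (d : ℤ) (hd : ¬ ((q ^ a : ℕ) : ℤ) ∣ d) :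
    norm (∑ u ∈ (range (q ^ a)).filter (q ^ a).Coprime, ζ ^ ((u : ℤ) * d))
      ≤ ((q ^ (a - 1) : ℕ) : ℝ) := by
  classical
  have hqa : 0 < q ^ a := pow_pos hq.pos a
  have hqq : q ^ a = q * q ^ (a - 1) := by
    conv_lhs => rw [show a = 1 + (a - 1) by omega]
    rw [pow_add, pow_one]
  -- total sum vanishes
  have htot : ∑ u ∈ range (q ^ a), ζ ^ ((u : ℤ) * d) = 0 := by
    rw [geom_zpow hζ d, if_neg (by exact_mod_cast hd)]
  -- the non-coprime part
  have hncop : (range (q ^ a)).filter (fun u => ¬ (q ^ a).Coprime u)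
      = (range (q ^ (a - 1))).image (fun v => q * v) := by
    ext u
    simp only [mem_filter, mem_range, mem_image]
    constructor
    · rintro ⟨hu, hnc⟩
      have hdvd : q ∣ u := by
        by_contra hnd
        exact hnc ((Nat.coprime_pow_left_iff ha q u).2 ((Nat.Prime.coprime_iff_not_dvd hq).2 hnd))
      obtain ⟨v, rfl⟩ := hdvd
      refine ⟨v, ?_, rfl⟩
      rw [hqq] at hu
      exact lt_of_mul_lt_mul_left hu (Nat.zero_le q)
    · rintro ⟨v, hv, rfl⟩
      constructor
      · rw [hqq]
        exact Nat.mul_lt_mul_of_le_of_lt (le_refl q) hv hq.pos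
      · intro hc
        have h1 := (Nat.coprime_pow_left_iff ha q (q * v)).1 hc
        exact (Nat.Prime.coprime_iff_not_dvd hq).1 h1 ⟨v, rfl⟩
  have hsplit := sum_filter_add_sum_filter_not (range (q ^ a)) ((q ^ a).Coprime)
      (fun u => ζ ^ ((u : ℤ) * d))
  have hζq : IsPrimitiveRoot (ζ ^ q) (q ^ (a - 1)) := hζ.pow hqa hqq
  have himg : ∑ u ∈ (range (q ^ (a - 1))).image (fun v => q * v), ζ ^ ((u : ℤ) * d)
      = if ((q ^ (a - 1) : ℕ) : ℤ) ∣ d then ((q ^ (a - 1) : ℕ) : ℂ) else 0 := by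
    rw [sum_image (by intro x _ y _ h; exact Nat.eq_of_mul_eq_mul_left hq.pos h)]
    rw [← geom_zpow hζq d]
    apply Finset.sum_congr rfl
    intro v _
    rw [← zpow_natCast ζ q, ← zpow_mul]
    congr 1
    push_cast
    ring
  -- conclude
  have hS : ∑ u ∈ (range (q ^ a)).filter (q ^ a).Coprime, ζ ^ ((u : ℤ) * d)
      = - (if ((q ^ (a - 1) : ℕ) : ℤ) ∣ d then ((q ^ (a - 1) : ℕ) : ℂ) else 0) := by
    have h2 : ∑ u ∈ (range (q ^ a)).filter (fun u => ¬ (q ^ a).Coprime u), ζ ^ ((u : ℤ) * d)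
        = if ((q ^ (a - 1) : ℕ) : ℤ) ∣ d then ((q ^ (a - 1) : ℕ) : ℂ) else 0 := by
      rw [hncop, himg]
    rw [h2, htot] at hsplit
    linear_combination hsplit
  rw [hS, norm_neg]
  split_ifs with h
  · rw [Complex.norm_natCast]
  · rw [norm_zero]
    positivity

private lemma coprime_mod_iff (m u : ℕ) : m.Coprime (u % m) ↔ m.Coprime u := by
  unfold Nat.Coprime
  rw [Nat.gcd_comm m (u % m), ← Nat.gcd_rec m u]

private lemma RS_mul {M₁ M₂ : ℕ} (h1 : 0 < M₁) (h2 : 0 < M₂) (hcop : M₁.Coprime M₂)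
    {ζ : ℂ} (hζ : IsPrimitiveRoot ζ (M₁ * M₂)) (d : ℤ) :
    ∃ ζ₁ ζ₂ : ℂ, IsPrimitiveRoot ζ₁ M₁ ∧ IsPrimitiveRoot ζ₂ M₂ ∧
      (∑ u ∈ (range (M₁ * M₂)).filter (M₁ * M₂).Coprime, ζ ^ ((u : ℤ) * d)) =
      (∑ u ∈ (range M₁).filter M₁.Coprime, ζ₁ ^ ((u : ℤ) * d)) *
      (∑ u ∈ (range M₂).filter M₂.Coprime, ζ₂ ^ ((u : ℤ) * d)) := by
  classical
  have hN : 0 < M₁ * M₂ := Nat.mul_pos h1 h2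
  have hζ0 : ζ ≠ 0 := hζ.ne_zero hN.ne'
  have hbez : (M₁ : ℤ) * Nat.gcdA M₁ M₂ + (M₂ : ℤ) * Nat.gcdB M₁ M₂ = 1 := by
    have h := Nat.gcd_eq_gcd_ab M₁ M₂
    rw [Nat.Coprime.gcd_eq_one hcop] at h
    exact_mod_cast h.symm
  set s : ℤ := Nat.gcdA M₁ M₂ with hs
  set t : ℤ := Nat.gcdB M₁ M₂ with ht
  -- general primitivity helper
  have hprim : ∀ (A B : ℕ) (x : ℤ), 0 < A → 0 < B → (M₁ * M₂ : ℕ) = A * B →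
      (A : ℤ) ∣ ((B : ℤ) * x - 1) → IsPrimitiveRoot (ζ ^ ((B : ℤ) * x)) A := by
    intro A B x hA hB hAB hx
    constructor
    · rw [← zpow_natCast (ζ ^ ((B : ℤ) * x)), ← zpow_mul]
      have he : (B : ℤ) * x * (A : ℕ) = ((M₁ * M₂ : ℕ) : ℤ) * x := by
        push_cast [hAB]; ring
      rw [he, zpow_mul, zpow_natCast, hζ.pow_eq_one, one_zpow]
    · intro l hl
      rw [← zpow_natCast (ζ ^ ((B : ℤ) * x)), ← zpow_mul] at hl
      have hdvd : ((M₁ * M₂ : ℕ) : ℤ) ∣ ((B : ℤ) * x * l) := (hζ.zpow_eq_one_iff_dvd _).1 hl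
      have hA_dvd : (A : ℤ) ∣ x * (l : ℤ) := by
        obtain ⟨k, hk⟩ := hdvd
        refine ⟨k, ?_⟩
        have hB0 : (B : ℤ) ≠ 0 := by exact_mod_cast hB.ne'
        apply mul_left_cancel₀ hB0
        have hABz : ((M₁ * M₂ : ℕ) : ℤ) = (A : ℤ) * B := by exact_mod_cast hAB
        rw [hABz] at hk
        linear_combination hk
      have hl_dvd : (A : ℤ) ∣ (l : ℤ) := by
        obtain ⟨k1, hk1⟩ := hA_dvd
        obtain ⟨k2, hk2⟩ := hx
        refine ⟨(B : ℤ) * k1 - k2 * l, ?_⟩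
        linear_combination (B : ℤ) * hk1 - (l : ℤ) * hk2
      exact_mod_cast hl_dvd
  have h1p : IsPrimitiveRoot (ζ ^ ((M₂ : ℤ) * t)) M₁ :=
    hprim M₁ M₂ t h1 h2 rfl ⟨-s, by linear_combination hbez⟩
  have h2p : IsPrimitiveRoot (ζ ^ ((M₁ : ℤ) * s)) M₂ :=
    hprim M₂ M₁ s h2 h1 (mul_comm M₁ M₂) ⟨-t, by linear_combination hbez⟩
  set ζ₁ : ℂ := ζ ^ ((M₂ : ℤ) * t) with hz1
  set ζ₂ : ℂ := ζ ^ ((M₁ : ℤ) * s) with hz2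
  have hζ₁0 : ζ₁ ≠ 0 := h1p.ne_zero h1.ne'
  have hζ₂0 : ζ₂ ≠ 0 := h2p.ne_zero h2.ne'
  have hmulz : ζ₁ * ζ₂ = ζ := by
    rw [hz1, hz2, ← zpow_add₀ hζ0]
    have : (M₂ : ℤ) * t + (M₁ : ℤ) * s = 1 := by linear_combination hbez
    rw [this, zpow_one]
  -- pointwise key
  have key : ∀ u : ℕ, ζ ^ ((u : ℤ) * d)
      = ζ₁ ^ (((u % M₁ : ℕ) : ℤ) * d) * ζ₂ ^ (((u % M₂ : ℕ) : ℤ) * d) := by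
    intro u
    have e1 : ζ₁ ^ ((u : ℤ) * d) = ζ₁ ^ (((u % M₁ : ℕ) : ℤ) * d) := by
      apply zpow_eq_of_dvd_sub h1p h1
      have : ((u : ℤ) * d - ((u % M₁ : ℕ) : ℤ) * d) = ((u : ℤ) - ((u % M₁ : ℕ) : ℤ)) * d := by
        ring
      rw [this]
      apply Dvd.dvd.mul_right
      refine ⟨((u / M₁ : ℕ) : ℤ), ?_⟩
      have h := Nat.mod_add_div u M₁
      have h' : ((u % M₁ : ℕ) : ℤ) + (M₁ : ℤ) * ((u / M₁ : ℕ) : ℤ) = (u : ℤ) := by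
        exact_mod_cast h
      linarith
    have e2 : ζ₂ ^ ((u : ℤ) * d) = ζ₂ ^ (((u % M₂ : ℕ) : ℤ) * d) := by
      apply zpow_eq_of_dvd_sub h2p h2
      have : ((u : ℤ) * d - ((u % M₂ : ℕ) : ℤ) * d) = ((u : ℤ) - ((u % M₂ : ℕ) : ℤ)) * d := by
        ring
      rw [this]
      apply Dvd.dvd.mul_right
      refine ⟨((u / M₂ : ℕ) : ℤ), ?_⟩
      have h := Nat.mod_add_div u M₂
      have h' : ((u % M₂ : ℕ) : ℤ) + (M₂ : ℤ) * ((u / M₂ : ℕ) : ℤ) = (u : ℤ) := by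
        exact_mod_cast h
      linarith
    rw [← hmulz, mul_zpow, e1, e2]
  -- reindex the sum
  refine ⟨ζ₁, ζ₂, h1p, h2p, ?_⟩
  rw [Finset.sum_mul_sum]
  rw [← Finset.sum_product']
  apply Finset.sum_nbij' (i := fun u => (u % M₁, u % M₂))
    (j := fun p => (Nat.chineseRemainder hcop p.1 p.2 : ℕ) % (M₁ * M₂))
  · -- maps to
    intro u hu
    simp only [mem_filter, mem_range] at hu
    simp only [Finset.mem_product, mem_filter, mem_range]
    have hc1 : M₁.Coprime u := Nat.Coprime.coprime_dvd_left (dvd_mul_right M₁ M₂) hu.2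
    have hc2 : M₂.Coprime u := Nat.Coprime.coprime_dvd_left (dvd_mul_left M₂ M₁) hu.2
    refine ⟨⟨Nat.mod_lt u h1, ?_⟩, ⟨Nat.mod_lt u h2, ?_⟩⟩
    · exact (coprime_mod_iff M₁ u).2 hc1
    · exact (coprime_mod_iff M₂ u).2 hc2
  · -- inverse maps to
    intro p hp
    simp only [Finset.mem_product, mem_filter, mem_range] at hp
    simp only [mem_filter, mem_range]
    set k := (Nat.chineseRemainder hcop p.1 p.2 : ℕ) with hk
    have hspec := (Nat.chineseRemainder hcop p.1 p.2).2
    have hm1 : (k % (M₁ * M₂)) % M₁ = p.1 := by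
      rw [Nat.mod_mod_of_dvd k (dvd_mul_right M₁ M₂)]
      have := hspec.1
      unfold Nat.ModEq at this
      rw [this, Nat.mod_eq_of_lt hp.1.1]
    have hm2 : (k % (M₁ * M₂)) % M₂ = p.2 := by
      rw [Nat.mod_mod_of_dvd k (dvd_mul_left M₂ M₁)]
      have := hspec.2
      unfold Nat.ModEq at this
      rw [this, Nat.mod_eq_of_lt hp.2.1]
    constructor
    · exact Nat.mod_lt _ hN
    · rw [Nat.coprime_mul_iff_left]
      constructor
      · have := (coprime_mod_iff M₁ (k % (M₁ * M₂))).1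
        rw [hm1] at this
        exact this hp.1.2
      · have := (coprime_mod_iff M₂ (k % (M₁ * M₂))).1
        rw [hm2] at this
        exact this hp.2.2
  · -- left inverse
    intro u hu
    simp only [mem_filter, mem_range] at hu
    set k := (Nat.chineseRemainder hcop (u % M₁) (u % M₂) : ℕ)
    have hspec := (Nat.chineseRemainder hcop (u % M₁) (u % M₂)).2
    have hmod : k ≡ u [MOD M₁ * M₂] := by
      rw [← Nat.modEq_and_modEq_iff_modEq_mul hcop]
      constructor
      · exact hspec.1.trans (Nat.mod_modEq u M₁)
      · exact hspec.2.trans (Nat.mod_modEq u M₂)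
    show k % (M₁ * M₂) = u
    unfold Nat.ModEq at hmod
    rw [hmod, Nat.mod_eq_of_lt hu.1]
  · -- right inverse
    intro p hp
    simp only [Finset.mem_product, mem_filter, mem_range] at hp
    set k := (Nat.chineseRemainder hcop p.1 p.2 : ℕ)
    have hspec := (Nat.chineseRemainder hcop p.1 p.2).2
    have hm1 : (k % (M₁ * M₂)) % M₁ = p.1 := by
      rw [Nat.mod_mod_of_dvd k (dvd_mul_right M₁ M₂)]
      have := hspec.1; unfold Nat.ModEq at this
      rw [this, Nat.mod_eq_of_lt hp.1.1]
    have hm2 : (k % (M₁ * M₂)) % M₂ = p.2 := by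
      rw [Nat.mod_mod_of_dvd k (dvd_mul_left M₂ M₁)]
      have := hspec.2; unfold Nat.ModEq at this
      rw [this, Nat.mod_eq_of_lt hp.2.1]
    exact Prod.ext hm1 hm2
  · -- values agree
    intro u hu
    exact key u

private lemma RS_bound {N : ℕ} (hN : 1 < N) {ζ : ℂ} (hζ : IsPrimitiveRoot ζ N) (d : ℤ)
    (hd : ¬ (N : ℤ) ∣ d) :
    ((N.minFac : ℝ) - 1) *
      norm (∑ u ∈ (range N).filter N.Coprime, ζ ^ ((u : ℤ) * d))
      ≤ (N.totient : ℝ) := by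
  classical
  have hN0 : N ≠ 0 := by omega
  -- pass to natAbs
  have hd0 : d ≠ 0 := by rintro rfl; exact hd (dvd_zero _)
  have hm0 : d.natAbs ≠ 0 := Int.natAbs_ne_zero.2 hd0
  have hdm : ¬ N ∣ d.natAbs := by
    intro hc
    apply hd
    rw [← Int.natAbs_natCast N] at hc ⊢
    exact Int.natAbs_dvd_natAbs.1 hc
  -- find a bad prime
  have hnotle : ¬ (N.factorization ≤ d.natAbs.factorization) := by
    rw [Nat.factorization_le_iff_dvd hN0 hm0]
    exact hdm
  rw [Finsupp.le_def] at hnotle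
  push_neg at hnotle
  obtain ⟨q, hq⟩ := hnotle
  have hqprime : q.Prime := by
    have hmem : q ∈ N.factorization.support := by
      rw [Finsupp.mem_support_iff]
      omega
    rw [Nat.support_factorization] at hmem
    exact Nat.prime_of_mem_primeFactors hmem
  set a : ℕ := N.factorization q with ha_def
  have ha : 0 < a := by omega
  have hqa_not : ¬ (q ^ a ∣ d.natAbs) := by
    rw [Nat.Prime.pow_dvd_iff_le_factorization hqprime hm0]
    omega
  have hqa_notz : ¬ ((q ^ a : ℕ) : ℤ) ∣ d := by
    intro hc
    apply hqa_not
    have h3 := Int.natAbs_dvd_natAbs.mpr hc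
    rw [Int.natAbs_natCast] at h3
    exact h3
  set M₂ : ℕ := N / q ^ a with hM₂
  have hN12 : N = q ^ a * M₂ := (Nat.ordProj_mul_ordCompl_eq_self N q).symm
  have h2 : 0 < M₂ := Nat.pos_of_ne_zero (by
    intro hc
    rw [hc, mul_zero] at hN12
    omega)
  have hcop : (q ^ a).Coprime M₂ := Nat.Coprime.pow_left _ (Nat.coprime_ordCompl hqprime hN0)
  have hζ' : IsPrimitiveRoot ζ (q ^ a * M₂) := by rw [← hN12]; exact hζ
  obtain ⟨ζ₁, ζ₂, hp1, hp2, heq⟩ := RS_mul (pow_pos hqprime.pos a) h2 hcop hζ' d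
  rw [← hN12] at heq
  rw [heq, norm_mul]
  have b1 := RS_prime_pow_bound hqprime ha hp1 d hqa_notz
  have b2 := RS_trivial hp2 h2 d
  have hqN : q ∣ N := by
    rw [hN12]
    exact Dvd.dvd.mul_right (dvd_pow_self q ha.ne') M₂
  have hminq : N.minFac ≤ q := Nat.minFac_le_of_dvd hqprime.two_le hqN
  have habs1 : (0:ℝ) ≤ norm (∑ u ∈ (range (q^a)).filter (q^a).Coprime, ζ₁ ^ ((u:ℤ)*d)) :=
    norm_nonneg _
  have habs2 : (0:ℝ) ≤ norm (∑ u ∈ (range M₂).filter M₂.Coprime, ζ₂ ^ ((u:ℤ)*d)) :=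
    norm_nonneg _
  have hq1 : (1:ℝ) ≤ (q:ℝ) := by exact_mod_cast hqprime.one_lt.le
  have hstep : ((N.minFac : ℝ) - 1) *
      (norm (∑ u ∈ (range (q^a)).filter (q^a).Coprime, ζ₁ ^ ((u:ℤ)*d)) *
       norm (∑ u ∈ (range M₂).filter M₂.Coprime, ζ₂ ^ ((u:ℤ)*d)))
      ≤ ((q:ℝ) - 1) * (((q ^ (a-1) : ℕ):ℝ) * (M₂.totient : ℝ)) := by
    apply mul_le_mul
    · have : (N.minFac : ℝ) ≤ (q : ℝ) := by exact_mod_cast hminq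
      linarith
    · apply mul_le_mul b1 b2 habs2 (by positivity)
    · positivity
    · linarith
  apply le_trans hstep
  have htot : (N.totient : ℝ) = ((q:ℝ) - 1) * (((q ^ (a-1) : ℕ):ℝ) * (M₂.totient : ℝ)) := by
    rw [hN12, Nat.totient_mul hcop, Nat.totient_prime_pow hqprime ha]
    push_cast [Nat.cast_sub hqprime.one_le]
    ring
  rw [htot]

private lemma vanishing_sum {N : ℕ} [NeZero N] (hN : 1 < N) {ζ : ℂ} (hζ : IsPrimitiveRoot ζ N)
    (c : ZMod N → ℤ)
    (hsum : ∑ b : ZMod N, (c b : ℂ) * ζ ^ (b.val) = 0)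
    (hsmall : ∑ b : ZMod N, |c b| < (N.minFac : ℤ)) :
    ∀ b, c b = 0 := by
  classical
  have hN0 : 0 < N := by omega
  have hζ0 : ζ ≠ 0 := hζ.ne_zero hN0.ne'
  -- polynomial and conjugates
  set P : Polynomial ℤ := ∑ b : ZMod N, Polynomial.C (c b) * Polynomial.X ^ (b.val) with hP
  have haev : ∀ z : ℂ, Polynomial.aeval z P = ∑ b : ZMod N, (c b : ℂ) * z ^ (b.val) := by
    intro z
    rw [hP, map_sum]
    apply Finset.sum_congr rfl
    intro b _
    simp
  have hdvd : cyclotomic N ℤ ∣ P := by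
    rw [cyclotomic_eq_minpoly hζ hN0]
    exact minpoly.isIntegrallyClosed_dvd (hζ.isIntegral hN0) (by rw [haev]; exact hsum)
  obtain ⟨D, hD⟩ := hdvd
  have hconj : ∀ u : ℕ, N.Coprime u → ∑ b : ZMod N, (c b : ℂ) * (ζ ^ u) ^ (b.val) = 0 := by
    intro u hu
    have hprim : IsPrimitiveRoot (ζ ^ u) N := hζ.pow_of_coprime u hu.symm
    have hroot : Polynomial.aeval ((ζ : ℂ) ^ u) (cyclotomic N ℤ) = 0 := by
      have h1 : (cyclotomic N ℂ).IsRoot (ζ ^ u) := hprim.isRoot_cyclotomic hN0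
      rw [Polynomial.aeval_def, Polynomial.eval₂_eq_eval_map, map_cyclotomic]
      exact h1
    have h2 : Polynomial.aeval ((ζ : ℂ) ^ u) P = 0 := by
      rw [hD, map_mul, hroot, zero_mul]
    rw [haev] at h2
    exact h2
  -- averaging
  set U : Finset ℕ := (range N).filter N.Coprime with hU
  set S : ℤ → ℂ := fun e => ∑ u ∈ U, ζ ^ ((u : ℤ) * e) with hS
  have havg : ∀ b0 : ZMod N, ∑ b : ZMod N, (c b : ℂ) * S ((b.val : ℤ) - (b0.val : ℤ)) = 0 := by
    intro b0
    have hterm : ∀ b : ZMod N, ∀ u : ℕ,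
        ζ ^ ((u : ℤ) * ((b.val : ℤ) - (b0.val : ℤ)))
          = (ζ ^ u) ^ (b.val) * ζ ^ (-((u : ℤ) * (b0.val : ℤ))) := by
      intro b u
      rw [← pow_mul, ← zpow_natCast ζ (u * b.val), ← zpow_add₀ hζ0]
      congr 1
      push_cast
      ring
    calc ∑ b : ZMod N, (c b : ℂ) * S ((b.val : ℤ) - (b0.val : ℤ))
        = ∑ b : ZMod N, ∑ u ∈ U, (c b : ℂ) * ζ ^ ((u : ℤ) * ((b.val : ℤ) - (b0.val : ℤ))) := by
          apply Finset.sum_congr rfl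
          intro b _
          rw [hS, Finset.mul_sum]
    _ = ∑ u ∈ U, ∑ b : ZMod N, (c b : ℂ) * ζ ^ ((u : ℤ) * ((b.val : ℤ) - (b0.val : ℤ))) :=
          Finset.sum_comm
    _ = ∑ u ∈ U, (ζ ^ (-((u : ℤ) * (b0.val : ℤ)))) * ∑ b : ZMod N, (c b : ℂ) * (ζ ^ u) ^ (b.val) := by
          apply Finset.sum_congr rfl
          intro u _
          rw [Finset.mul_sum]
          apply Finset.sum_congr rfl
          intro b _
          rw [hterm b u]
          ring
    _ = 0 := by
          apply Finset.sum_eq_zero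
          intro u hu
          rw [hU, mem_filter] at hu
          rw [hconj u hu.2, mul_zero]
  -- main bound per coefficient
  intro b0
  have hS0 : S 0 = (N.totient : ℂ) := by
    rw [hS]
    simp only [mul_zero, zpow_zero]
    rw [Finset.sum_const, nsmul_eq_mul, mul_one, hU, Nat.totient_eq_card_coprime]
  have hsplit : (c b0 : ℂ) * (N.totient : ℂ)
      = - ∑ b ∈ Finset.univ.erase b0, (c b : ℂ) * S ((b.val : ℤ) - (b0.val : ℤ)) := by
    have h := havg b0
    rw [← Finset.add_sum_erase _ _ (Finset.mem_univ b0)] at h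
    rw [sub_self, hS0] at h
    linear_combination h
  have habs : |(c b0 : ℝ)| * (N.totient : ℝ)
      ≤ ∑ b ∈ Finset.univ.erase b0,
          |(c b : ℝ)| * norm (S ((b.val : ℤ) - (b0.val : ℤ))) := by
    have h1 : norm ((c b0 : ℂ) * (N.totient : ℂ)) = |(c b0 : ℝ)| * (N.totient : ℝ) := by
      rw [norm_mul, Complex.norm_intCast, Complex.norm_natCast]
    rw [← h1, hsplit, norm_neg]
    refine le_trans (norm_sum_le _ _) ?_
    apply Finset.sum_le_sum
    intro b _
    rw [norm_mul, Complex.norm_intCast]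
  have hp2 : 2 ≤ N.minFac := (Nat.minFac_prime hN.ne').two_le
  have hSb : ∀ b ∈ Finset.univ.erase b0,
      ((N.minFac : ℝ) - 1) * norm (S ((b.val : ℤ) - (b0.val : ℤ))) ≤ (N.totient : ℝ) := by
    intro b hb
    apply RS_bound hN hζ
    intro hdvd
    have hb' : b ≠ b0 := (Finset.mem_erase.1 hb).1
    apply hb'
    have hlt : |(b.val : ℤ) - (b0.val : ℤ)| < (N : ℤ) := by
      have h1 := ZMod.val_lt b
      have h2 := ZMod.val_lt b0
      rw [abs_sub_lt_iff]
      omega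
    have h0 : (b.val : ℤ) - (b0.val : ℤ) = 0 := Int.eq_zero_of_abs_lt_dvd hdvd hlt
    have : b.val = b0.val := by omega
    exact ZMod.val_injective N this
  have hφpos : (0 : ℝ) < (N.totient : ℝ) := by
    exact_mod_cast Nat.totient_pos.2 hN0
  have hkey : ((N.minFac : ℝ) - 1) * |(c b0 : ℝ)| ≤ ∑ b ∈ Finset.univ.erase b0, |(c b : ℝ)| := by
    have hstep : ((N.minFac : ℝ) - 1) * (|(c b0 : ℝ)| * (N.totient : ℝ))
        ≤ ∑ b ∈ Finset.univ.erase b0, |(c b : ℝ)| * (N.totient : ℝ) := by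
      calc ((N.minFac : ℝ) - 1) * (|(c b0 : ℝ)| * (N.totient : ℝ))
          ≤ ((N.minFac : ℝ) - 1) * ∑ b ∈ Finset.univ.erase b0,
              |(c b : ℝ)| * norm (S ((b.val : ℤ) - (b0.val : ℤ))) := by
            apply mul_le_mul_of_nonneg_left habs
            have : (2 : ℝ) ≤ (N.minFac : ℝ) := by exact_mod_cast hp2
            linarith
      _ = ∑ b ∈ Finset.univ.erase b0,
            |(c b : ℝ)| * (((N.minFac : ℝ) - 1) * norm (S ((b.val : ℤ) - (b0.val : ℤ)))) := by
            rw [Finset.mul_sum]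
            apply Finset.sum_congr rfl
            intro b _
            ring
      _ ≤ ∑ b ∈ Finset.univ.erase b0, |(c b : ℝ)| * (N.totient : ℝ) := by
            apply Finset.sum_le_sum
            intro b hb
            exact mul_le_mul_of_nonneg_left (hSb b hb) (abs_nonneg _)
    rw [← Finset.sum_mul] at hstep
    have h2 := le_of_mul_le_mul_right (by linarith [hstep] :
      (((N.minFac : ℝ) - 1) * |(c b0 : ℝ)|) * (N.totient : ℝ)
        ≤ (∑ b ∈ Finset.univ.erase b0, |(c b : ℝ)|) * (N.totient : ℝ)) hφpos
    exact h2
  have hZ : ((N.minFac : ℤ) - 1) * |c b0| ≤ ∑ b ∈ Finset.univ.erase b0, |c b| := by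
    exact_mod_cast hkey
  have hall : |c b0| + ∑ b ∈ Finset.univ.erase b0, |c b| = ∑ b : ZMod N, |c b| :=
    Finset.add_sum_erase Finset.univ (fun b => |c b|) (Finset.mem_univ b0)
  by_contra hne
  have h1 : 1 ≤ |c b0| := Int.one_le_abs hne
  have hp2' : (2 : ℤ) ≤ (N.minFac : ℤ) := by exact_mod_cast hp2
  nlinarith [hsmall, hZ, hall, h1, hp2']

private lemma conj_zpow_mem_iff {G : Type*} [Group G] (Hs : Subgroup G) (a w : G) (oo : ℕ)
    (hleast : IsLeast {m : ℕ | 0 < m ∧ a * w ^ m * a⁻¹ ∈ Hs} oo) (z : ℤ) :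
    a * w ^ z * a⁻¹ ∈ Hs ↔ (oo : ℤ) ∣ z := by
  have ho1 : 0 < oo := hleast.1.1
  have homem : a * w ^ (oo : ℤ) * a⁻¹ ∈ Hs := by rw [zpow_natCast]; exact hleast.1.2
  have hconj : ∀ i k : ℤ, a * w ^ (i * k) * a⁻¹ = (a * w ^ i * a⁻¹) ^ k := by
    intro i k; rw [conj_zpow, zpow_mul]
  constructor
  · intro hz
    set q := z / (oo : ℤ) with hq
    set rr := z % (oo : ℤ) with hrr
    have hz_eq : (oo : ℤ) * q + rr = z := Int.mul_ediv_add_emod z oo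
    have hrr0 : 0 ≤ rr := Int.emod_nonneg z (by exact_mod_cast ho1.ne')
    have hrrlt : rr < oo := Int.emod_lt_of_pos z (by exact_mod_cast ho1)
    have hmem_r : a * w ^ rr * a⁻¹ ∈ Hs := by
      have h1 : a * w ^ ((oo : ℤ) * q) * a⁻¹ ∈ Hs := by
        rw [hconj]; exact zpow_mem homem q
      have h2 : a * w ^ rr * a⁻¹ = (a * w ^ ((oo : ℤ) * q) * a⁻¹)⁻¹ * (a * w ^ z * a⁻¹) := by
        rw [← hz_eq]
        rw [zpow_add]
        group
      rw [h2]; exact mul_mem (inv_mem h1) hz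
    rcases eq_or_lt_of_le hrr0 with heq | hpos
    · refine ⟨q, by omega⟩
    · exfalso
      have hmem_nat : a * w ^ (rr.toNat) * a⁻¹ ∈ Hs := by
        rw [← zpow_natCast w, Int.toNat_of_nonneg hrr0]; exact hmem_r
      have hle := hleast.2 ⟨by omega, hmem_nat⟩
      omega
  · rintro ⟨k, rfl⟩
    rw [hconj]; exact zpow_mem homem k

private lemma filter_mod_eq_image {L oo rr : ℕ} (hdvd : oo ∣ L) (ho : 0 < oo) (hrlt : rr < oo) :
    (range L).filter (fun x : ℕ => (oo : ℤ) ∣ ((x : ℤ) - (rr : ℤ))) =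
      (range (L / oo)).image (fun t => rr + oo * t) := by
  have hL : oo * (L / oo) = L := Nat.mul_div_cancel' hdvd
  ext x
  simp only [mem_filter, mem_range, mem_image]
  constructor
  · rintro ⟨hxL, k, hk⟩
    have hk0 : 0 ≤ k := by
      by_contra hneg
      push_neg at hneg
      have h1 : (oo : ℤ) * k ≤ (oo : ℤ) * (-1) := by
        apply mul_le_mul_of_nonneg_left (by omega) (by exact_mod_cast ho.le)
      have h2 : (0 : ℤ) ≤ (x : ℤ) := by exact_mod_cast Nat.zero_le x
      have h3 : (rr : ℤ) < oo := by exact_mod_cast hrlt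
      linarith
    have h2 : (oo : ℤ) * k < (oo : ℤ) * ((L / oo : ℕ) : ℤ) := by
      have hxL' : (x : ℤ) < (L : ℤ) := by exact_mod_cast hxL
      have hLz : ((oo : ℕ) : ℤ) * ((L / oo : ℕ) : ℤ) = (L : ℤ) := by exact_mod_cast hL
      linarith
    have h3 : k < ((L / oo : ℕ) : ℤ) :=
      lt_of_mul_lt_mul_left h2 (by exact_mod_cast ho.le)
    refine ⟨k.toNat, by omega, ?_⟩
    have : ((rr + oo * k.toNat : ℕ) : ℤ) = (x : ℤ) := by
      push_cast
      rw [Int.toNat_of_nonneg hk0]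
      linarith
    exact_mod_cast this
  · rintro ⟨t, ht, rfl⟩
    constructor
    · have h4 : oo * (t + 1) ≤ oo * (L / oo) := Nat.mul_le_mul_left oo (by omega)
      have h5 : oo * (t + 1) = oo + oo * t := by ring
      omega
    · exact ⟨t, by push_cast; ring⟩


/-- Fix a coset partition `{H i • α i}` of `F n`, `w ∈ F n` with orders
`o i = o_{*i}(w)`, and `y ∈ F n`. Let `Y` be the set of indices whose coset meets the
`w`-orbit of `y`, and suppose `o i > 1` for some `i ∈ Y`. Let `omax` be the maximum of
`o i` over `Y`. Then (1) at least `minFac omax` indices `i ∈ Y` satisfy `o i = omax`, and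
(2) for every `l ∈ Y` there is `k ∈ Y`, `k ≠ l`, with `o l ∣ o k`. -/
theorem loop_erdos_properties
    (n s : ℕ) (hn : 2 ≤ n)
    (H : Fin s → Subgroup (FreeGroup (Fin n)))
    (α : Fin s → FreeGroup (Fin n))
    (d : Fin s → ℕ)
    (hind : ∀ i, (H i).index = d i)
    (hone : ∀ i, 1 < d i)
    (hpart : ∀ x : FreeGroup (Fin n), ∃! i : Fin s, x * (α i)⁻¹ ∈ H i)
    (w : FreeGroup (Fin n)) (o : Fin s → ℕ)
    (ho : ∀ i, IsLeast {m : ℕ | 0 < m ∧ α i * w ^ m * (α i)⁻¹ ∈ H i} (o i))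
    (y : FreeGroup (Fin n))
    (Y : Set (Fin s))
    (hY : Y = {i : Fin s | ∃ j : ℤ, y * w ^ j * (α i)⁻¹ ∈ H i})
    (hnontriv : ∃ i ∈ Y, 1 < o i)
    (omax : ℕ)
    (homax_mem : ∃ i ∈ Y, o i = omax)
    (homax_ub : ∀ i ∈ Y, o i ≤ omax) :
    omax.minFac ≤ Set.ncard {i : Fin s | i ∈ Y ∧ o i = omax} ∧
    ∀ l ∈ Y, ∃ k ∈ Y, k ≠ l ∧ o l ∣ o k := by
  classical
  have hopos : ∀ i, 0 < o i := fun i => (ho i).1.1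
  obtain ⟨i₀, hi₀Y, hi₀⟩ := hnontriv
  have homax1 : 1 < omax := lt_of_lt_of_le hi₀ (homax_ub i₀ hi₀Y)
  have homax0 : 0 < omax := by omega
  haveI : NeZero omax := ⟨homax0.ne'⟩
  set L : ℕ := ∏ i : Fin s, o i with hLdef
  have hdvdL : ∀ i, o i ∣ L := fun i => Finset.dvd_prod_of_mem o (Finset.mem_univ i)
  have hLpos : 0 < L := Finset.prod_pos (fun i _ => hopos i)
  -- covering function
  set F : ℤ → Fin s := fun x => (hpart (y * w ^ x)).choose with hF
  have hFmem : ∀ x : ℤ, y * w ^ x * (α (F x))⁻¹ ∈ H (F x) :=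
    fun x => (hpart (y * w ^ x)).choose_spec.1
  have hFuniq : ∀ (x : ℤ) (i : Fin s), y * w ^ x * (α i)⁻¹ ∈ H i → F x = i :=
    fun x i h => ((hpart (y * w ^ x)).choose_spec.2 i h).symm
  have hFY : ∀ x : ℤ, F x ∈ Y := fun x => by rw [hY]; exact ⟨x, hFmem x⟩
  -- congruence along the orbit
  have hcong : ∀ (i : Fin s) (x x' : ℤ), y * w ^ x * (α i)⁻¹ ∈ H i →
      (y * w ^ x' * (α i)⁻¹ ∈ H i ↔ (o i : ℤ) ∣ (x' - x)) := by
    intro i x x' hx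
    have key := conj_zpow_mem_iff (H i) (α i) w (o i) (ho i) (x' - x)
    constructor
    · intro hx'
      rw [← key]
      have heq : α i * w ^ (x' - x) * (α i)⁻¹
          = (y * w ^ x * (α i)⁻¹)⁻¹ * (y * w ^ x' * (α i)⁻¹) := by
        rw [zpow_sub]
        group
      rw [heq]
      exact mul_mem (inv_mem hx) hx'
    · intro hdv
      have h2 : α i * w ^ (x' - x) * (α i)⁻¹ ∈ H i := key.2 hdv
      have heq : y * w ^ x' * (α i)⁻¹
          = (y * w ^ x * (α i)⁻¹) * (α i * w ^ (x' - x) * (α i)⁻¹) := by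
        rw [zpow_sub]
        group
      rw [heq]
      exact mul_mem hx h2
  -- residues
  have hres : ∀ i : Fin s, ∃ rr : ℕ, i ∈ Y → (rr < o i ∧ y * w ^ (rr : ℤ) * (α i)⁻¹ ∈ H i) := by
    intro i
    by_cases hi : i ∈ Y
    · rw [hY] at hi
      obtain ⟨j, hj⟩ := hi
      have hoiz : (0 : ℤ) < (o i : ℤ) := by exact_mod_cast hopos i
      have hm0 : 0 ≤ j % (o i : ℤ) := Int.emod_nonneg j hoiz.ne'
      have hmlt : j % (o i : ℤ) < (o i : ℤ) := Int.emod_lt_of_pos j hoiz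
      refine ⟨(j % (o i : ℤ)).toNat, fun _ => ⟨by omega, ?_⟩⟩
      have hmem : y * w ^ (j % (o i : ℤ)) * (α i)⁻¹ ∈ H i := by
        refine (hcong i j (j % (o i : ℤ)) hj).2 ⟨-(j / (o i : ℤ)), ?_⟩
        have := Int.mul_ediv_add_emod j (o i : ℤ)
        linarith
      rwa [Int.toNat_of_nonneg hm0]
    · exact ⟨0, fun h => absurd h hi⟩
  choose r hr using hres
  have hFr : ∀ i, i ∈ Y → F ((r i : ℕ) : ℤ) = i := fun i hi => hFuniq _ i (hr i hi).2
  -- master identity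
  have master : ∀ (M : ℕ) (μ : ℂ), IsPrimitiveRoot μ M → 1 < M → M ∣ L →
      ∑ i : Fin s, (if i ∈ Y ∧ M ∣ o i then μ ^ (r i) * ((L / o i : ℕ) : ℂ) else 0) = 0 := by
    intro M μ hμ hM1 hML
    have hμ1 : μ ≠ 1 := by
      have := hμ.pow_ne_one_of_pos_of_lt (by norm_num) hM1
      rwa [pow_one] at this
    have hμL : μ ^ L = 1 := by
      obtain ⟨k, hk⟩ := hML
      rw [hk, pow_mul, hμ.pow_eq_one, one_pow]
    have h0 : ∑ x ∈ range L, μ ^ x = 0 := geom_zero hμ1 hμL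
    have hfib := Finset.sum_fiberwise_of_maps_to (s := range L) (t := Finset.univ)
      (g := fun x : ℕ => F (x : ℤ)) (fun x _ => Finset.mem_univ _) (fun x : ℕ => μ ^ x)
    have hmain : ∑ i : Fin s, (if i ∈ Y ∧ M ∣ o i then μ ^ (r i) * ((L / o i : ℕ) : ℂ) else 0)
        = ∑ j : Fin s, ∑ x ∈ (range L).filter (fun x : ℕ => F (x : ℤ) = j), μ ^ x := by
      apply Finset.sum_congr rfl
      intro i _
      by_cases hi : i ∈ Y
      · have hfe : (range L).filter (fun x : ℕ => F (x : ℤ) = i)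
            = (range L).filter (fun x : ℕ => (o i : ℤ) ∣ ((x : ℤ) - ((r i : ℕ) : ℤ))) := by
          apply Finset.filter_congr
          intro x _
          constructor
          · intro hFx
            refine (hcong i ((r i : ℕ) : ℤ) (x : ℤ) (hr i hi).2).1 ?_
            rw [← hFx] at *
            exact hFmem (x : ℤ)
          · intro hdv
            exact hFuniq _ i ((hcong i ((r i : ℕ) : ℤ) (x : ℤ) (hr i hi).2).2 hdv)
        rw [hfe, filter_mod_eq_image (hdvdL i) (hopos i) (hr i hi).1]
        rw [Finset.sum_image (by
          intro a _ b _ hab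
          have := Nat.eq_of_mul_eq_mul_left (hopos i) (by simp only at hab; omega : o i * a = o i * b)
          omega)]
        have hterm : ∀ t ∈ range (L / o i), μ ^ (r i + o i * t) = μ ^ (r i) * (μ ^ (o i)) ^ t := by
          intro t _
          rw [pow_add, pow_mul]
        rw [Finset.sum_congr rfl hterm, ← Finset.mul_sum]
        have hgeo : ∑ t ∈ range (L / o i), (μ ^ (o i)) ^ t
            = if M ∣ o i then ((L / o i : ℕ) : ℂ) else 0 := by
          have hp1 : (μ ^ (o i)) ^ (L / o i) = 1 := by
            rw [← pow_mul, Nat.mul_div_cancel' (hdvdL i), hμL]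
          rw [geom_ite hp1]
          exact if_congr (hμ.pow_eq_one_iff_dvd (o i)) rfl rfl
        rw [hgeo]
        by_cases hMo : M ∣ o i
        · rw [if_pos hMo, if_pos ⟨hi, hMo⟩]
        · rw [if_neg hMo, mul_zero, if_neg]
          rintro ⟨_, hMo'⟩
          exact hMo hMo'
      · have hempty : (range L).filter (fun x : ℕ => F (x : ℤ) = i) = ∅ :=
          Finset.filter_false_of_mem (fun x _ => fun hFx => hi (hFx ▸ hFY (x : ℤ)))
        rw [if_neg (fun hc : i ∈ Y ∧ M ∣ o i => hi hc.1), hempty, Finset.sum_empty]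
    rw [hmain, hfib, h0]
  constructor
  · -- part 1 : counting classes with maximal order
    set ζ : ℂ := Complex.exp (2 * Real.pi * Complex.I / omax) with hζdef
    have hζ : IsPrimitiveRoot ζ omax := Complex.isPrimitiveRoot_exp omax homax0.ne'
    obtain ⟨i₁, hi₁Y, hi₁⟩ := homax_mem
    have homaxL : omax ∣ L := hi₁ ▸ hdvdL i₁
    have hmaster := master omax ζ hζ homax1 homaxL
    set Tfin : Finset (Fin s) := Finset.univ.filter (fun i => i ∈ Y ∧ o i = omax) with hT
    have hcond : ∀ i : Fin s, (i ∈ Y ∧ omax ∣ o i) ↔ (i ∈ Y ∧ o i = omax) := by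
      intro i
      constructor
      · rintro ⟨h1, h2⟩
        exact ⟨h1, le_antisymm (homax_ub i h1) (Nat.le_of_dvd (hopos i) h2)⟩
      · rintro ⟨h1, h2⟩
        exact ⟨h1, h2 ▸ dvd_rfl⟩
    have hmaster2 : ∑ i ∈ Tfin, ζ ^ (r i) * ((L / omax : ℕ) : ℂ) = 0 := by
      have hstep : ∑ i ∈ Tfin, ζ ^ (r i) * ((L / omax : ℕ) : ℂ)
          = ∑ i : Fin s, (if i ∈ Y ∧ omax ∣ o i then ζ ^ (r i) * ((L / o i : ℕ) : ℂ) else 0) := by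
        rw [hT, Finset.sum_filter]
        apply Finset.sum_congr rfl
        intro i _
        by_cases h : i ∈ Y ∧ o i = omax
        · rw [if_pos h, if_pos ((hcond i).2 h), h.2]
        · rw [if_neg h, if_neg (fun hh => h ((hcond i).1 hh))]
      rw [hstep]
      exact hmaster
    have hLo : ((L / omax : ℕ) : ℂ) ≠ 0 := by
      have hpos : 0 < L / omax := Nat.div_pos (Nat.le_of_dvd hLpos homaxL) homax0
      exact_mod_cast hpos.ne'
    have hsum0 : ∑ i ∈ Tfin, ζ ^ (r i) = 0 := by
      have h := hmaster2
      rw [← Finset.sum_mul] at h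
      exact (mul_eq_zero.1 h).resolve_right hLo
    have hTmem : ∀ i ∈ Tfin, i ∈ Y ∧ o i = omax := by
      intro i hi
      rw [hT, Finset.mem_filter] at hi
      exact hi.2
    have hrlt : ∀ i ∈ Tfin, r i < omax := by
      intro i hi
      have h1 := (hr i (hTmem i hi).1).1
      rw [(hTmem i hi).2] at h1
      exact h1
    have hinj2 : ∀ i ∈ Tfin, ∀ j ∈ Tfin, ((r i : ZMod omax) = (r j : ZMod omax)) → i = j := by
      intro i hi j hj hij
      have h1 : r i = r j := by
        have e1 := ZMod.val_cast_of_lt (hrlt i hi)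
        have e2 := ZMod.val_cast_of_lt (hrlt j hj)
        rw [← e1, ← e2, hij]
      have f1 := hFr i (hTmem i hi).1
      have f2 := hFr j (hTmem j hj).1
      rw [h1] at f1
      exact f1.symm.trans f2
    set img : Finset (ZMod omax) := Tfin.image (fun i => ((r i : ZMod omax))) with himg
    have hcard : img.card = Tfin.card := Finset.card_image_of_injOn hinj2
    set c : ZMod omax → ℤ := fun b => if b ∈ img then 1 else 0 with hc
    have hcsum : ∑ b : ZMod omax, (c b : ℂ) * ζ ^ (b.val) = 0 := by
      have h1 : ∀ b : ZMod omax, (c b : ℂ) * ζ ^ (b.val)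
          = if b ∈ img then ζ ^ (b.val) else 0 := by
        intro b
        simp only [hc]
        split_ifs with h
        · simp
        · simp
      rw [Finset.sum_congr rfl (fun b _ => h1 b), Finset.sum_ite_mem, Finset.univ_inter]
      rw [himg, Finset.sum_image hinj2]
      have h2 : ∀ i ∈ Tfin, ζ ^ (((r i : ZMod omax)).val) = ζ ^ (r i) := by
        intro i hi
        rw [ZMod.val_cast_of_lt (hrlt i hi)]
      rw [Finset.sum_congr rfl h2]
      exact hsum0
    have hcsmall_card : ∑ b : ZMod omax, |c b| = (Tfin.card : ℤ) := by
      have h1 : ∀ b : ZMod omax, |c b| = if b ∈ img then (1 : ℤ) else 0 := by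
        intro b
        simp only [hc]
        split_ifs <;> simp
      rw [Finset.sum_congr rfl (fun b _ => h1 b), Finset.sum_ite_mem, Finset.univ_inter,
        Finset.sum_const, hcard]
      simp
    have hncard : {i : Fin s | i ∈ Y ∧ o i = omax}.ncard = Tfin.card := by
      have hset : {i : Fin s | i ∈ Y ∧ o i = omax} = ↑Tfin := by
        ext i
        simp [hT]
      rw [hset, Set.ncard_coe_finset]
    rw [hncard]
    by_contra hlt
    push_neg at hlt
    have hsmall : ∑ b : ZMod omax, |c b| < (omax.minFac : ℤ) := by
      rw [hcsmall_card]
      exact_mod_cast hlt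
    have hzero := vanishing_sum homax1 hζ c hcsum hsmall
    have hi₁T : i₁ ∈ Tfin := by
      rw [hT, Finset.mem_filter]
      exact ⟨Finset.mem_univ _, hi₁Y, hi₁⟩
    have hmem_img : ((r i₁ : ZMod omax)) ∈ img := by
      rw [himg]
      exact Finset.mem_image_of_mem _ hi₁T
    have hz := hzero ((r i₁ : ZMod omax))
    simp only [hc] at hz
    rw [if_pos hmem_img] at hz
    exact one_ne_zero hz
  · -- part 2 : divisibility
    intro l hlY
    by_cases hol : o l = 1
    · refine ⟨i₀, hi₀Y, ?_, hol ▸ one_dvd _⟩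
      intro hcontra
      rw [hcontra, hol] at hi₀
      omega
    · have hol1 : 1 < o l := by have := hopos l; omega
      set μ : ℂ := Complex.exp (2 * Real.pi * Complex.I / (o l)) with hμdef
      have hμ : IsPrimitiveRoot μ (o l) := Complex.isPrimitiveRoot_exp _ (hopos l).ne'
      by_contra hcon
      push_neg at hcon
      have hmaster := master (o l) μ hμ hol1 (hdvdL l)
      have hsingle : ∑ i : Fin s,
          (if i ∈ Y ∧ (o l) ∣ o i then μ ^ (r i) * ((L / o i : ℕ) : ℂ) else 0)
          = (if l ∈ Y ∧ (o l) ∣ o l then μ ^ (r l) * ((L / o l : ℕ) : ℂ) else 0) := by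
        apply Finset.sum_eq_single
        · intro k _ hkl
          by_cases hkY : k ∈ Y
          · rw [if_neg]
            rintro ⟨_, hdv⟩
            exact hcon k hkY hkl hdv
          · rw [if_neg (fun hc => hkY hc.1)]
        · intro hnot
          exact absurd (Finset.mem_univ l) hnot
      rw [hsingle, if_pos ⟨hlY, dvd_rfl⟩] at hmaster
      have h1 : μ ^ (r l) ≠ 0 := pow_ne_zero _ (Complex.exp_ne_zero _)
      have h2 : ((L / o l : ℕ) : ℂ) ≠ 0 := by
        have hpos : 0 < L / o l := Nat.div_pos (Nat.le_of_dvd hLpos (hdvdL l)) (hopos l)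
        exact_mod_cast hpos.ne'
      exact (mul_ne_zero h1 h2) hmaster
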